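/- For |a|,|b|,|c|,|d|,|t| < 1 and c ≠ d, the contour integral over |z₁| = 1 of z₁ (1−z₁²) / [(1−az₁)(1−bz₁)(1−cz₁)(1−dz₁)(z₁−c)(z₁−d)] · ∏_{j=2}^{n} (z_j−z₁)(1−z₁z_j)/[(z_j−tz₁)(1−tz₁z_j)] · dz₁/(2πi), with z₂,…,z_n fixed on the unit circle, equals c/[(1−ac)(1−bc)(1−cd)(c−d)] · ∏_{j=2}^{n} (z_j−c)(1−cz_j)/[(z_j−tc)(1−tcz_j)] + d/[(1−ad)(1−bd)(1−cd)(d−c)] · ∏_{j=2}^{n} (z_j−d)(1−dz_j)/[(z_j−td)(1−tdz_j)]. -/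

import Mathlib

open Finset Metric

set_option maxHeartbeats 1000000

section aux

private lemma one_sub_ne (x z : ℂ) (hx : ‖x‖ < 1) (hzle : ‖z‖ ≤ 1) : 1 - x * z ≠ 0 := by
  intro h
  have hxz : x * z = 1 := by linear_combination -h
  have h1 : ‖x * z‖ = 1 := by rw [hxz]; simp
  rw [norm_mul] at h1
  nlinarith [norm_nonneg x, norm_nonneg z]

end aux

/-- The single-variable residue computation underlying the recursion for the `q = 0`
nonsymmetric Koornwinder constant term: integrating out `z₁` over the unit circle,
with `z₂, …, z_n` fixed on the unit circle, picks up the residues at the simple poles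
`z₁ = c` and `z₁ = d`. -/
theorem residue_step (m : ℕ) (a b c d t : ℂ)
    (ha : ‖a‖ < 1) (hb : ‖b‖ < 1) (hc : ‖c‖ < 1) (hd : ‖d‖ < 1) (ht : ‖t‖ < 1)
    (hcd : c ≠ d) (zs : Fin m → ℂ) (hz : ∀ j, ‖zs j‖ = 1) :
    (2 * Real.pi * Complex.I)⁻¹ *
      (∮ z in C((0 : ℂ), 1),
        z * (1 - z ^ 2) /
            ((1 - a * z) * (1 - b * z) * (1 - c * z) * (1 - d * z) * (z - c) * (z - d)) *
          ∏ j : Fin m,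
            ((zs j - z) * (1 - z * zs j)) / ((zs j - t * z) * (1 - t * z * zs j)))
    = c / ((1 - a * c) * (1 - b * c) * (1 - c * d) * (c - d)) *
        (∏ j : Fin m, ((zs j - c) * (1 - c * zs j)) / ((zs j - t * c) * (1 - t * c * zs j)))
      + d / ((1 - a * d) * (1 - b * d) * (1 - c * d) * (d - c)) *
        ∏ j : Fin m, ((zs j - d) * (1 - d * zs j)) / ((zs j - t * d) * (1 - t * d * zs j)) := by
  obtain ⟨P, hP⟩ : ∃ P : ℂ → ℂ, ∀ z,
      P z = ∏ j : Fin m, ((zs j - z) * (1 - z * zs j)) / ((zs j - t * z) * (1 - t * z * zs j)) :=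
    ⟨_, fun _ => rfl⟩
  obtain ⟨g, hg⟩ : ∃ g : ℂ → ℂ, ∀ z,
      g z = z * (1 - z ^ 2) / ((1 - a * z) * (1 - b * z) * (1 - c * z) * (1 - d * z)) * P z :=
    ⟨_, fun _ => rfl⟩
  simp only [← hP]
  -- nonvanishing of denominators on the closed disk
  have htz : ∀ z : ℂ, ‖z‖ ≤ 1 → ∀ j : Fin m, zs j - t * z ≠ 0 := by
    intro z hzle j h
    have h1 : zs j = t * z := by linear_combination h
    have : (1 : ℝ) ≤ ‖t‖ * ‖z‖ := by rw [← norm_mul, ← h1, hz j]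
    nlinarith [norm_nonneg z, norm_nonneg t]
  have htz2 : ∀ z : ℂ, ‖z‖ ≤ 1 → ∀ j : Fin m, 1 - t * z * zs j ≠ 0 := by
    intro z hzle j
    have : ‖t * z‖ < 1 := by
      rw [norm_mul]; nlinarith [norm_nonneg z, norm_nonneg t]
    simpa using one_sub_ne (t * z) (zs j) this (le_of_eq (hz j))
  have hD : ∀ z : ℂ, ‖z‖ ≤ 1 →
      (1 - a * z) * (1 - b * z) * (1 - c * z) * (1 - d * z) ≠ 0 := by
    intro z hzle
    exact mul_ne_zero (mul_ne_zero (mul_ne_zero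
      (one_sub_ne a z ha hzle) (one_sub_ne b z hb hzle))
      (one_sub_ne c z hc hzle)) (one_sub_ne d z hd hzle)
  -- differentiability of g on the closed disk
  have hclball : ∀ z : ℂ, z ∈ closedBall (0 : ℂ) 1 → ‖z‖ ≤ 1 := by
    intro z hzmem; simpa [mem_closedBall, dist_zero_right] using hzmem
  have hgd : DifferentiableOn ℂ g (closedBall (0 : ℂ) 1) := by
    have : DifferentiableOn ℂ (fun z =>
        z * (1 - z ^ 2) / ((1 - a * z) * (1 - b * z) * (1 - c * z) * (1 - d * z)) *
          ∏ j : Fin m, ((zs j - z) * (1 - z * zs j)) / ((zs j - t * z) * (1 - t * z * zs j)))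
        (closedBall (0 : ℂ) 1) := by
      apply DifferentiableOn.mul
      · apply DifferentiableOn.div
        · exact (differentiable_id.mul (by fun_prop)).differentiableOn
        · fun_prop
        · intro z hzmem; exact hD z (hclball z hzmem)
      · apply DifferentiableOn.fun_finsetProd
        intro j _
        apply DifferentiableOn.div
        · fun_prop
        · fun_prop
        · intro z hzmem
          exact mul_ne_zero (htz z (hclball z hzmem) j) (htz2 z (hclball z hzmem) j)
    refine this.congr ?_
    intro z _; rw [hg, hP]
  have hgcl : DiffContOnCl ℂ g (ball (0 : ℂ) 1) := by
    apply DifferentiableOn.diffContOnCl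
    rwa [closure_ball (0 : ℂ) one_ne_zero]
  have hcmem : c ∈ ball (0 : ℂ) 1 := by simpa [mem_ball, dist_zero_right] using hc
  have hdmem : d ∈ ball (0 : ℂ) 1 := by simpa [mem_ball, dist_zero_right] using hd
  have hIc := hgcl.circleIntegral_sub_inv_smul hcmem
  have hId := hgcl.circleIntegral_sub_inv_smul hdmem
  -- integrability of the two auxiliary integrands
  have hcontg : ContinuousOn g (sphere (0 : ℂ) 1) :=
    (hgd.continuousOn).mono (by
      intro z hzmem
      simp only [mem_sphere_iff_norm, sub_zero] at hzmem
      simp only [mem_closedBall, dist_zero_right]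
      exact hzmem.le)
  have hsub : ∀ w : ℂ, ‖w‖ < 1 → ContinuousOn (fun z => (z - w)⁻¹ • g z) (sphere (0 : ℂ) 1) := by
    intro w hw
    apply ContinuousOn.fun_smul _ hcontg
    apply ContinuousOn.inv₀ (by fun_prop)
    intro z hzmem h
    simp only [mem_sphere_iff_norm, sub_zero] at hzmem
    have : z = w := by linear_combination h
    rw [this] at hzmem; exact absurd hzmem (by linarith)
  have hic : CircleIntegrable (fun z => (z - c)⁻¹ • g z) 0 1 :=
    ContinuousOn.circleIntegrable zero_le_one (hsub c hc)
  have hid : CircleIntegrable (fun z => (z - d)⁻¹ • g z) 0 1 :=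
    ContinuousOn.circleIntegrable zero_le_one (hsub d hd)
  have hcd' : c - d ≠ 0 := sub_ne_zero.mpr hcd
  have hdc' : d - c ≠ 0 := sub_ne_zero.mpr (Ne.symm hcd)
  -- rewrite the integrand via partial fractions
  have hkey : (∮ z in C((0 : ℂ), 1),
      z * (1 - z ^ 2) /
          ((1 - a * z) * (1 - b * z) * (1 - c * z) * (1 - d * z) * (z - c) * (z - d)) * P z)
      = ∮ z in C((0 : ℂ), 1),
          (c - d)⁻¹ • ((z - c)⁻¹ • g z - (z - d)⁻¹ • g z) := by
    apply circleIntegral.integral_congr zero_le_one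
    intro z hzmem
    simp only [mem_sphere_iff_norm, sub_zero] at hzmem
    have hzc : z - c ≠ 0 := by
      intro h; have : z = c := by linear_combination h
      rw [this] at hzmem; exact absurd hzmem (by linarith)
    have hzd : z - d ≠ 0 := by
      intro h; have : z = d := by linear_combination h
      rw [this] at hzmem; exact absurd hzmem (by linarith)
    have hDz := hD z hzmem.le
    simp only [smul_eq_mul, hg]
    field_simp
    ring
  rw [hkey, circleIntegral.integral_smul, smul_eq_mul,
    circleIntegral.integral_sub hic hid, hIc, hId]
  -- evaluate g at c and d
  have hc2 : (1 : ℂ) - c * c ≠ 0 := one_sub_ne c c hc hc.le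
  have hd2 : (1 : ℂ) - d * d ≠ 0 := one_sub_ne d d hd hd.le
  have hac : (1 : ℂ) - a * c ≠ 0 := one_sub_ne a c ha hc.le
  have hbc : (1 : ℂ) - b * c ≠ 0 := one_sub_ne b c hb hc.le
  have hdc2 : (1 : ℂ) - d * c ≠ 0 := one_sub_ne d c hd hc.le
  have had : (1 : ℂ) - a * d ≠ 0 := one_sub_ne a d ha hd.le
  have hbd : (1 : ℂ) - b * d ≠ 0 := one_sub_ne b d hb hd.le
  have hcd2 : (1 : ℂ) - c * d ≠ 0 := one_sub_ne c d hc hd.le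
  have hpi : (2 * (Real.pi : ℂ) * Complex.I) ≠ 0 := by
    simp [Real.pi_ne_zero, Complex.I_ne_zero]
  have hco1 : (c - d)⁻¹ * (c * (1 - c ^ 2) / ((1 - a * c) * (1 - b * c) * (1 - c * c) * (1 - d * c)))
      = c / ((1 - a * c) * (1 - b * c) * (1 - c * d) * (c - d)) := by
    rw [inv_mul_eq_div, div_div, div_eq_div_iff
      (mul_ne_zero (mul_ne_zero (mul_ne_zero (mul_ne_zero hac hbc) hc2) hdc2) hcd')
      (mul_ne_zero (mul_ne_zero (mul_ne_zero hac hbc) hcd2) hcd')]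
    ring
  have hco2 : (d - c)⁻¹ * (d * (1 - d ^ 2) / ((1 - a * d) * (1 - b * d) * (1 - c * d) * (1 - d * d)))
      = d / ((1 - a * d) * (1 - b * d) * (1 - c * d) * (d - c)) := by
    rw [inv_mul_eq_div, div_div, div_eq_div_iff
      (mul_ne_zero (mul_ne_zero (mul_ne_zero (mul_ne_zero had hbd) hcd2) hd2) hdc')
      (mul_ne_zero (mul_ne_zero (mul_ne_zero had hbd) hcd2) hdc')]
    ring
  have h1 : (c - d)⁻¹ * g c
      = c / ((1 - a * c) * (1 - b * c) * (1 - c * d) * (c - d)) * P c := by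
    rw [hg, ← mul_assoc, hco1]
  have h2 : (d - c)⁻¹ * g d
      = d / ((1 - a * d) * (1 - b * d) * (1 - c * d) * (d - c)) * P d := by
    rw [hg, ← mul_assoc, hco2]
  rw [← h1, ← h2]
  simp only [smul_eq_mul]
  field_simp
  ring
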